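/- Let α₁, α₂, β₁, β₂ be nonnegative reals with β₁β₂ < 1 satisfying (α₁α₂ - 1)² ≤ (α₁² - β₁)(α₂² - β₂). Then α₁α₂ ≥ (1/2)(1 + √(β₁β₂)). -/
import Mathlib


theorem cross_ratio_key_algebraic_step
    (α₁ α₂ β₁ β₂ : ℝ) (hα₁ : 0 ≤ α₁) (hα₂ : 0 ≤ α₂) (hβ₁ : 0 ≤ β₁) (hβ₂ : 0 ≤ β₂)
    (hββ : β₁ * β₂ < 1)
    (h : (α₁ * α₂ - 1) ^ 2 ≤ (α₁ ^ 2 - β₁) * (α₂ ^ 2 - β₂)) :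
    α₁ * α₂ ≥ (1 / 2) * (1 + Real.sqrt (β₁ * β₂)) := by
  set s := Real.sqrt (β₁ * β₂) with hs_def
  have hs0 : 0 ≤ s := Real.sqrt_nonneg _
  have hs2 : s ^ 2 = β₁ * β₂ := Real.sq_sqrt (by positivity)
  have hs1 : s < 1 := by nlinarith
  have hmul : Real.sqrt β₁ * Real.sqrt β₂ = s := (Real.sqrt_mul hβ₁ β₂).symm
  have h1 : Real.sqrt β₁ ^ 2 = β₁ := Real.sq_sqrt hβ₁
  have h2 : Real.sqrt β₂ ^ 2 = β₂ := Real.sq_sqrt hβ₂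
  have hAM : 2 * s * (α₁ * α₂) ≤ β₂ * α₁ ^ 2 + β₁ * α₂ ^ 2 := by
    have e : β₂ * α₁ ^ 2 + β₁ * α₂ ^ 2 - 2 * s * (α₁ * α₂)
        = (Real.sqrt β₂ * α₁ - Real.sqrt β₁ * α₂) ^ 2 := by
      linear_combination -α₁ ^ 2 * h2 - α₂ ^ 2 * h1 + 2 * (α₁ * α₂) * hmul
    nlinarith [sq_nonneg (Real.sqrt β₂ * α₁ - Real.sqrt β₁ * α₂)]
  have hkey : 2 * s * (α₁ * α₂) ≤ 2 * (α₁ * α₂) - 1 + s ^ 2 := by nlinarith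
  nlinarith [mul_pos (sub_pos.mpr hs1) (sub_pos.mpr hs1)]
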